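/- Let a, b ∈ ℂ and consider the Mathieu-Hill operators H_t. There exist ρ ∈ (0, 1/(15π)), K > 0, and N ∈ ℕ such that for all integers n > N and all t ∈ [0, n^{−3}], every eigenvalue λ of H_t satisfying |λ − (2πn + t)²| ≤ 15πnρ satisfies |λ − (2πn)²| ≤ K·n^{−2}. -/

import Mathlib

namespace Mathieu

/-- The Mathieu potential `q(x) = a e^{-2πix} + b e^{2πix}`. -/
noncomputable def qpot (a b : ℂ) (x : ℝ) : ℂ :=
  a * Complex.exp (-(2 * Real.pi * x) * Complex.I) +
    b * Complex.exp ((2 * Real.pi * x) * Complex.I)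

/-- `y` is an eigenfunction of `H_t` (with potential (4)) for the eigenvalue `lam`:
it is twice continuously differentiable, not identically zero on `[0,1]`, solves
`-y'' + q y = λ y` on `[0,1]`, and satisfies the `t`-periodic boundary conditions (2). -/
def IsEigenfunction (a b : ℂ) (t : ℝ) (lam : ℂ) (y : ℝ → ℂ) : Prop :=
  ContDiff ℝ 2 y ∧ (∃ x ∈ Set.Icc (0 : ℝ) 1, y x ≠ 0) ∧
  (∀ x ∈ Set.Icc (0 : ℝ) 1, -(deriv (deriv y) x) + qpot a b x * y x = lam * y x) ∧
  y 1 = Complex.exp (Complex.I * t) * y 0 ∧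
  deriv y 1 = Complex.exp (Complex.I * t) * deriv y 0

/-- `lam` is an eigenvalue of the operator `H_t`. -/
def IsEigenvalue (a b : ℂ) (t : ℝ) (lam : ℂ) : Prop :=
  ∃ y : ℝ → ℂ, IsEigenfunction a b t lam y

end Mathieu

open Mathieu


noncomputable def mE (mu : ℝ) (x : ℝ) : ℂ := Complex.exp ((-(mu:ℂ) * Complex.I) * (x:ℝ))

lemma mE_hasDeriv (mu : ℝ) (x : ℝ) :
    HasDerivAt (mE mu) ((-(mu:ℂ) * Complex.I) * mE mu x) x := by
  have h1 : HasDerivAt (fun x : ℝ => ((-(mu:ℂ) * Complex.I) * (x:ℝ))) (-(mu:ℂ) * Complex.I) x := by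
    simpa using (Complex.ofRealCLM.hasDerivAt (x := x)).const_mul (-(mu:ℂ) * Complex.I)
  have h2 := h1.cexp
  have : (fun x : ℝ => Complex.exp ((-(mu:ℂ) * Complex.I) * (x:ℝ))) = mE mu := rfl
  rw [this] at h2
  convert h2 using 1
  rw [mE]; ring

lemma mE_cont (mu : ℝ) : Continuous (mE mu) := by
  unfold mE; fun_prop

lemma mE_zero (mu : ℝ) : mE mu 0 = 1 := by simp [mE]

lemma mE_norm (mu x : ℝ) : ‖mE mu x‖ = 1 := by
  simp only [mE, Complex.norm_exp]
  have : (-(mu:ℂ) * Complex.I * (x:ℝ)).re = 0 := by simp [Complex.mul_re]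
  simp [this]

lemma mE_one (k : ℤ) (t : ℝ) :
    mE (2 * Real.pi * k + t) 1 = Complex.exp (-(t:ℂ) * Complex.I) := by
  have h : (-(((2 * Real.pi * k + t):ℝ):ℂ) * Complex.I) * ((1:ℝ):ℂ)
      = ((-k : ℤ) : ℂ) * (2 * (Real.pi:ℂ) * Complex.I) + (-(t:ℂ) * Complex.I) := by
    push_cast; ring
  rw [mE, h, Complex.exp_add, Complex.exp_int_mul_two_pi_mul_I, one_mul]

lemma mE_one_mul_bd (k : ℤ) (t : ℝ) (z : ℂ) :
    mE (2 * Real.pi * k + t) 1 * (Complex.exp (Complex.I * t) * z) = z := by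
  rw [mE_one, ← mul_assoc, ← Complex.exp_add]
  ring_nf
  simp

noncomputable def mcoef (t : ℝ) (y : ℝ → ℂ) (k : ℤ) : ℂ :=
  ∫ x in (0:ℝ)..1, mE (2 * Real.pi * k + t) x * y x

section
variable {a b : ℂ} {t : ℝ} {lam : ℂ} {y : ℝ → ℂ}

lemma cont_y' (hy : ContDiff ℝ 2 y) : Continuous (deriv y) :=
  hy.continuous_deriv (by norm_num)

lemma contDiff_y' (hy : ContDiff ℝ 2 y) : ContDiff ℝ 1 (deriv y) := by
  have h2 : ContDiff ℝ ((1:ℕ) + 1) y := by exact_mod_cast hy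
  exact (contDiff_succ_iff_deriv.mp h2).2.2

lemma cont_y'' (hy : ContDiff ℝ 2 y) : Continuous (deriv (deriv y)) :=
  (contDiff_y' hy).continuous_deriv (by norm_num)

lemma hd_y (hy : ContDiff ℝ 2 y) (x : ℝ) : HasDerivAt y (deriv y x) x :=
  ((hy.differentiable (by norm_num)) x).hasDerivAt

lemma hd_y' (hy : ContDiff ℝ 2 y) (x : ℝ) : HasDerivAt (deriv y) (deriv (deriv y) x) x :=
  (((contDiff_y' hy).differentiable (by norm_num)) x).hasDerivAt

/-- Integration by parts twice. -/
lemma ibp (hy : ContDiff ℝ 2 y)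
    (hb1 : y 1 = Complex.exp (Complex.I * t) * y 0)
    (hb2 : deriv y 1 = Complex.exp (Complex.I * t) * deriv y 0) (k : ℤ) :
    (∫ x in (0:ℝ)..1, mE (2 * Real.pi * k + t) x * deriv (deriv y) x)
      = -(((2 * Real.pi * k + t : ℝ):ℂ))^2 * mcoef t y k := by
  set mu : ℝ := 2 * Real.pi * k + t with hmu
  have hu : ∀ x ∈ Set.uIcc (0:ℝ) 1, HasDerivAt (mE mu) ((-(mu:ℂ) * Complex.I) * mE mu x) x :=
    fun x _ => mE_hasDeriv mu x
  have hiu : IntervalIntegrable (fun x => (-(mu:ℂ) * Complex.I) * mE mu x)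
      MeasureTheory.volume 0 1 := (continuous_const.mul (mE_cont mu)).intervalIntegrable 0 1
  have step1 := intervalIntegral.integral_mul_deriv_eq_deriv_mul hu
      (fun x _ => hd_y' hy x) hiu
      ((cont_y'' hy).intervalIntegrable 0 1)
  have step2 := intervalIntegral.integral_mul_deriv_eq_deriv_mul hu
      (fun x _ => hd_y hy x) hiu
      ((cont_y' hy).intervalIntegrable 0 1)
  have hbd1 : mE mu 1 * deriv y 1 - mE mu 0 * deriv y 0 = 0 := by
    rw [hb2, hmu, mE_one_mul_bd, mE_zero, one_mul, sub_self]
  have hbd2 : mE mu 1 * y 1 - mE mu 0 * y 0 = 0 := by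
    rw [hb1, hmu, mE_one_mul_bd, mE_zero, one_mul, sub_self]
  rw [hbd1] at step1
  rw [hbd2] at step2
  have hpull : ∀ g : ℝ → ℂ, (∫ x in (0:ℝ)..1, (-(mu:ℂ) * Complex.I) * mE mu x * g x)
      = (-(mu:ℂ) * Complex.I) * ∫ x in (0:ℝ)..1, mE mu x * g x := by
    intro g
    rw [← intervalIntegral.integral_const_mul]
    congr 1; ext x; ring
  rw [hpull] at step1 step2
  rw [step1, step2, mcoef, ← hmu]
  ring_nf
  rw [Complex.I_sq]
  ring
end

lemma qpot_cont (a b : ℂ) : Continuous (qpot a b) := by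
  unfold qpot; fun_prop

lemma mE_mul_qpot (a b : ℂ) (t : ℝ) (k : ℤ) (x : ℝ) (z : ℂ) :
    mE (2 * Real.pi * k + t) x * (qpot a b x * z)
      = a * (mE (2 * Real.pi * (k+1:ℤ) + t) x * z) + b * (mE (2 * Real.pi * (k-1:ℤ) + t) x * z) := by
  have e1 : mE (2 * Real.pi * k + t) x * Complex.exp (-(2 * Real.pi * x) * Complex.I)
      = mE (2 * Real.pi * (k+1:ℤ) + t) x := by
    rw [mE, mE, ← Complex.exp_add]; congr 1; push_cast; ring
  have e2 : mE (2 * Real.pi * k + t) x * Complex.exp ((2 * Real.pi * x) * Complex.I)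
      = mE (2 * Real.pi * (k-1:ℤ) + t) x := by
    rw [mE, mE, ← Complex.exp_add]; congr 1; push_cast; ring
  rw [qpot, ← e1, ← e2]; ring

section
variable {a b : ℂ} {t : ℝ} {lam : ℂ} {y : ℝ → ℂ}

lemma mcoef_rec (hy : IsEigenfunction a b t lam y) (k : ℤ) :
    lam * mcoef t y k = (((2 * Real.pi * k + t : ℝ):ℂ))^2 * mcoef t y k
      + a * mcoef t y (k+1) + b * mcoef t y (k-1) := by
  obtain ⟨hC, -, hode, hb1, hb2⟩ := hy
  set mu : ℝ := 2 * Real.pi * k + t with hmu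
  have hcy : Continuous y := hC.continuous
  have h1 : lam * mcoef t y k = ∫ x in (0:ℝ)..1, mE mu x * (lam * y x) := by
    rw [mcoef, ← intervalIntegral.integral_const_mul]
    congr 1; ext x; ring
  have h2 : (∫ x in (0:ℝ)..1, mE mu x * (lam * y x))
      = ∫ x in (0:ℝ)..1, (-(mE mu x * deriv (deriv y) x) + mE mu x * (qpot a b x * y x)) := by
    apply intervalIntegral.integral_congr
    intro x hx
    rw [Set.uIcc_of_le (by norm_num : (0:ℝ) ≤ 1)] at hx
    simp only []
    rw [← hode x hx]; ring
  have h3 : (∫ x in (0:ℝ)..1, (-(mE mu x * deriv (deriv y) x) + mE mu x * (qpot a b x * y x)))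
      = (∫ x in (0:ℝ)..1, -(mE mu x * deriv (deriv y) x))
        + ∫ x in (0:ℝ)..1, mE mu x * (qpot a b x * y x) := by
    apply intervalIntegral.integral_add
    · exact ((((mE_cont mu).mul (cont_y'' hC))).neg).intervalIntegrable 0 1
    · exact ((mE_cont mu).mul ((qpot_cont a b).mul hcy)).intervalIntegrable 0 1
  have h4 : (∫ x in (0:ℝ)..1, -(mE mu x * deriv (deriv y) x))
      = ((mu:ℂ))^2 * mcoef t y k := by
    rw [intervalIntegral.integral_neg, ibp hC hb1 hb2 k]; ring
  have h5 : (∫ x in (0:ℝ)..1, mE mu x * (qpot a b x * y x))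
      = a * mcoef t y (k+1) + b * mcoef t y (k-1) := by
    have : (∫ x in (0:ℝ)..1, mE mu x * (qpot a b x * y x))
        = ∫ x in (0:ℝ)..1, (a * (mE (2 * Real.pi * (k+1:ℤ) + t) x * y x)
            + b * (mE (2 * Real.pi * (k-1:ℤ) + t) x * y x)) := by
      apply intervalIntegral.integral_congr
      intro x _
      exact mE_mul_qpot a b t k x (y x)
    rw [this, intervalIntegral.integral_add, intervalIntegral.integral_const_mul,
      intervalIntegral.integral_const_mul, mcoef, mcoef]
    · exact (continuous_const.mul ((mE_cont _).mul hcy)).intervalIntegrable 0 1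
    · exact (continuous_const.mul ((mE_cont _).mul hcy)).intervalIntegrable 0 1
  rw [h1, h2, h3, h4, h5]; ring

end

section
variable {a b : ℂ} {t : ℝ} {lam : ℂ} {y : ℝ → ℂ}

lemma mcoef_exists_ne_zero (hy : IsEigenfunction a b t lam y) :
    ∃ k : ℤ, mcoef t y k ≠ 0 := by
  haveI : Fact ((0:ℝ) < 1) := ⟨zero_lt_one⟩
  obtain ⟨hC, ⟨x0, hx0, hx0ne⟩, -, hb1, -⟩ := hy
  by_contra hall
  push_neg at hall
  set g : ℝ → ℂ := fun x => mE t x * y x with hg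
  have hgcont : Continuous g := (mE_cont t).mul hC.continuous
  have hgper : g 0 = g (0 + 1) := by
    have h1 : mE t 1 * y 1 = y 0 := by
      have := mE_one_mul_bd 0 t (y 0)
      simp only [Int.cast_zero, mul_zero, zero_add] at this
      rw [hb1]; exact this
    simp only [hg, zero_add, h1, mE_zero, one_mul]
  -- Fourier coefficients of the lift equal mcoef
  have hcoeff : ∀ k : ℤ, fourierCoeff (AddCircle.liftIco 1 0 g) k = mcoef t y k := by
    intro k
    rw [fourierCoeff_liftIco_eq g k, fourierCoeffOn_eq_integral]
    rw [mcoef]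
    simp only [zero_add, sub_zero, one_smul, div_one]
    apply intervalIntegral.integral_congr
    intro x _
    show (fourier (-k)) ↑x • g x = mE (2 * Real.pi * ↑k + t) x * y x
    rw [fourier_coe_apply]
    rw [smul_eq_mul, hg]
    rw [← mul_assoc]
    congr 1
    rw [mE, mE, ← Complex.exp_add]
    congr 1
    push_cast
    ring
  set F : C(AddCircle 1, ℂ) :=
    ⟨AddCircle.liftIco 1 0 g, AddCircle.liftIco_continuous
      (by rw [← hgper]) (hgcont.continuousOn)⟩ with hF
  have hFzero : ∀ k : ℤ, fourierCoeff (⇑F) k = 0 := by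
    intro k
    rw [show ⇑F = AddCircle.liftIco 1 0 g from rfl, hcoeff k, hall k]
  -- lift to L2 and use the Hilbert basis
  set fL := ContinuousMap.toLp (E := ℂ) 2 AddCircle.haarAddCircle ℂ F with hfL
  have hrepr : fourierBasis.repr fL = 0 := by
    apply lp.ext
    funext i
    rw [fourierBasis_repr, hfL, fourierCoeff_toLp, hFzero i]
    rfl
  have hfL0 : fL = 0 := by
    apply fourierBasis.repr.injective
    rw [hrepr, map_zero]
  have hae : ⇑F =ᵐ[AddCircle.haarAddCircle] (fun _ => 0) := by
    have h1 := ContinuousMap.coeFn_toLp (E := ℂ) (𝕜 := ℂ) (p := 2) AddCircle.haarAddCircle F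
    rw [← hfL, hfL0] at h1
    have h2 : ⇑(0 : MeasureTheory.Lp ℂ 2 (AddCircle.haarAddCircle (T := 1)))
        =ᵐ[AddCircle.haarAddCircle] (fun _ => 0) := MeasureTheory.Lp.coeFn_zero ℂ 2 _
    exact h1.symm.trans h2
  have hFeq : ⇑F = fun _ => 0 :=
    (Continuous.ae_eq_iff_eq AddCircle.haarAddCircle F.continuous continuous_const).mp hae
  have hyzero : ∀ x : ℝ, x ∈ Set.Ico (0:ℝ) 1 → y x = 0 := by
    intro x hx
    have h1 : AddCircle.liftIco 1 0 g (↑x : AddCircle (1:ℝ)) = g x :=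
      AddCircle.liftIco_coe_apply (by rw [zero_add]; exact hx)
    have h2 : AddCircle.liftIco 1 0 g (↑x : AddCircle (1:ℝ)) = 0 := by
      rw [show AddCircle.liftIco 1 0 g = ⇑F from rfl, hFeq]
    rw [h2] at h1
    have := h1
    rw [hg] at this
    simp only at this
    rcases mul_eq_zero.mp this.symm with h | h
    · exact absurd h (Complex.exp_ne_zero _)
    · exact h
  have hy1 : y 1 = 0 := by
    rw [hb1, hyzero 0 (by norm_num), mul_zero]
  rcases eq_or_lt_of_le hx0.2 with h | h
  · exact hx0ne (h ▸ hy1)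
  · exact hx0ne (hyzero x0 ⟨hx0.1, h⟩)

end

-- factor estimates
lemma fac_lb {t : ℝ} (ht0 : 0 ≤ t) (ht1 : t ≤ 1) (j : ℤ) (hj : j ≠ 0) :
    5 * |(j:ℝ)| ≤ |2 * Real.pi * (j:ℝ) + t| := by
  have hpi := Real.pi_gt_d6
  rcases lt_or_gt_of_ne hj with h | h
  · have hj1' : j ≤ -1 := by omega
    have hj1 : (j:ℝ) ≤ -1 := by exact_mod_cast hj1'
    have habs : |(j:ℝ)| = -(j:ℝ) := abs_of_neg (by linarith)
    have hneg : 2 * Real.pi * (j:ℝ) + t ≤ 0 := by nlinarith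
    rw [habs, abs_of_nonpos hneg]
    nlinarith
  · have hj1 : (1:ℝ) ≤ (j:ℝ) := by exact_mod_cast h
    have habs : |(j:ℝ)| = (j:ℝ) := abs_of_pos (by linarith)
    have hpos : 0 ≤ 2 * Real.pi * (j:ℝ) + t := by nlinarith
    rw [habs, abs_of_nonneg hpos]
    nlinarith

lemma fac_ub {t : ℝ} (ht0 : 0 ≤ t) (ht1 : t ≤ 1) (j : ℤ) :
    |2 * Real.pi * (j:ℝ) + t| ≤ 7 * |(j:ℝ)| + 1 := by
  have hpi := Real.pi_lt_d6
  have h1 : |2 * Real.pi * (j:ℝ) + t| ≤ |2 * Real.pi * (j:ℝ)| + |t| := abs_add_le _ _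
  have h2 : |2 * Real.pi * (j:ℝ)| = 2 * Real.pi * |(j:ℝ)| := by
    rw [abs_mul, abs_of_pos (by positivity : (0:ℝ) < 2 * Real.pi)]
  have h3 : |t| = t := abs_of_nonneg ht0
  have h4 : 0 ≤ |(j:ℝ)| := abs_nonneg _
  nlinarith

lemma ksq_le {t : ℝ} (ht0 : 0 ≤ t) (ht1 : t ≤ 1) (j : ℤ) (hj : j ≠ 0) :
    ((j:ℝ))^2 ≤ (2 * Real.pi * (j:ℝ) + t)^2 := by
  have h1 := fac_lb ht0 ht1 j hj
  have h2 : |(j:ℝ)| ≤ |2 * Real.pi * (j:ℝ) + t| := by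
    have := abs_nonneg ((j:ℝ)); linarith
  calc ((j:ℝ))^2 = |(j:ℝ)|^2 := (sq_abs _).symm
    _ ≤ |2 * Real.pi * (j:ℝ) + t|^2 := by
        exact pow_le_pow_left₀ (abs_nonneg _) h2 2
    _ = (2 * Real.pi * (j:ℝ) + t)^2 := sq_abs _

lemma fac_eq (k n : ℤ) (t : ℝ) :
    (2 * Real.pi * (k:ℝ) + t)^2 - (2 * Real.pi * (n:ℝ))^2
      = (2 * Real.pi * ((k - n : ℤ):ℝ) + t) * (2 * Real.pi * ((k + n : ℤ):ℝ) + t) := by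
  push_cast; ring

lemma sq_gap_int (k : ℤ) (n : ℕ) (hk : |k| ≠ (n:ℤ)) : 2 * (n:ℤ) - 1 ≤ |k^2 - (n:ℤ)^2| := by
  rcases lt_or_gt_of_ne hk with h | h
  · have h1 : |k| ≤ (n:ℤ) - 1 := by omega
    have h2 : k^2 ≤ ((n:ℤ) - 1)^2 := by
      have := abs_nonneg k
      calc k^2 = |k|^2 := (sq_abs k).symm
        _ ≤ ((n:ℤ)-1)^2 := by nlinarith
    have hn1 : 1 ≤ (n:ℤ) := by have := abs_nonneg k; omega
    have h3 : k^2 ≤ (n:ℤ)^2 := by nlinarith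
    rw [abs_of_nonpos (by linarith)]
    nlinarith
  · have h1 : (n:ℤ) + 1 ≤ |k| := by omega
    have h2 : ((n:ℤ)+1)^2 ≤ k^2 := by
      have h0 : (0:ℤ) ≤ (n:ℤ) + 1 := by positivity
      calc ((n:ℤ)+1)^2 ≤ |k|^2 := by nlinarith
        _ = k^2 := sq_abs k
    rw [abs_of_nonneg (by nlinarith [Int.natCast_nonneg n])]
    nlinarith [Int.natCast_nonneg n]

/-- Lower gap: for `|k| ≠ n`, `|μ_k² - (2πn)²| ≥ 25 n`. -/
lemma gap_lower {t : ℝ} (ht0 : 0 ≤ t) (ht1 : t ≤ 1) {n : ℕ} (hn : 1 ≤ n) (k : ℤ)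
    (hk : |k| ≠ (n:ℤ)) :
    25 * (n:ℝ) ≤ |(2 * Real.pi * (k:ℝ) + t)^2 - (2 * Real.pi * (n:ℝ))^2| := by
  have hkn : k - (n:ℤ) ≠ 0 := by
    intro h; apply hk
    have hkn2 : k = (n:ℤ) := by omega
    rw [hkn2, abs_of_nonneg (Int.natCast_nonneg n)]
  have hkn' : k + (n:ℤ) ≠ 0 := by
    intro h; apply hk
    have hkn2 : k = -(n:ℤ) := by omega
    rw [hkn2, abs_neg, abs_of_nonneg (Int.natCast_nonneg n)]
  have h1 := fac_lb ht0 ht1 (k - n) hkn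
  have h2 := fac_lb ht0 ht1 (k + n) hkn'
  have hfe : (2 * Real.pi * (k:ℝ) + t)^2 - (2 * Real.pi * (n:ℝ))^2
      = (2 * Real.pi * ((k - (n:ℤ) : ℤ):ℝ) + t) * (2 * Real.pi * ((k + (n:ℤ) : ℤ):ℝ) + t) := by
    push_cast; ring
  rw [hfe, abs_mul]
  have h3 : (25:ℝ) * (|((k - n : ℤ):ℝ)| * |((k + n : ℤ):ℝ)|)
      ≤ |2 * Real.pi * ((k - n : ℤ):ℝ) + t| * |2 * Real.pi * ((k + n : ℤ):ℝ) + t| := by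
    nlinarith [abs_nonneg ((k - n : ℤ):ℝ), abs_nonneg ((k + n : ℤ):ℝ),
      abs_nonneg (2 * Real.pi * ((k - n : ℤ):ℝ) + t)]
  have h4 : |((k - n : ℤ):ℝ)| * |((k + n : ℤ):ℝ)| = |((k^2 - (n:ℤ)^2 : ℤ):ℝ)| := by
    rw [← abs_mul]; congr 1; push_cast; ring
  have h5 : ((2 * (n:ℤ) - 1 : ℤ):ℝ) ≤ |((k^2 - (n:ℤ)^2 : ℤ):ℝ)| := by
    rw [← Int.cast_abs]
    exact_mod_cast sq_gap_int k n hk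
  have h6 : (n:ℝ) ≤ ((2 * (n:ℤ) - 1 : ℤ):ℝ) := by
    push_cast
    have : (1:ℝ) ≤ (n:ℝ) := by exact_mod_cast hn
    linarith
  calc (25:ℝ) * n ≤ 25 * |((k^2 - (n:ℤ)^2 : ℤ):ℝ)| := by nlinarith
    _ = 25 * (|((k - n : ℤ):ℝ)| * |((k + n : ℤ):ℝ)|) := by rw [h4]
    _ ≤ _ := h3

/-- Existence of a maximizing index. -/
lemma exists_max (c : ℤ → ℂ) {t D : ℝ} (ht0 : 0 ≤ t) (ht1 : t ≤ 1)
    (hD : ∀ k : ℤ, (2 * Real.pi * (k:ℝ) + t)^2 * ‖c k‖ ≤ D) (hne : ∃ j, c j ≠ 0) :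
    ∃ k0 : ℤ, 0 < ‖c k0‖ ∧ ∀ k : ℤ, ‖c k‖ ≤ ‖c k0‖ := by
  obtain ⟨j, hj⟩ := hne
  have hε : 0 < ‖c j‖ := norm_pos_iff.mpr hj
  set ε := ‖c j‖ with hεdef
  have hD0 : 0 ≤ D := le_trans (by positivity) (hD j)
  set M : ℤ := ⌈D / ε⌉ + 1 with hM
  have hM0 : 0 ≤ ⌈D / ε⌉ := Int.ceil_nonneg (div_nonneg hD0 hε.le)
  have hsub : {k : ℤ | ε ≤ ‖c k‖} ⊆ Set.Icc (-M) M := by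
    intro k hk
    simp only [Set.mem_setOf_eq] at hk
    by_cases hk0 : k = 0
    · subst hk0; rw [Set.mem_Icc]; omega
    · have hsq := ksq_le ht0 ht1 k hk0
      have h1 : ε * ((k:ℝ))^2 ≤ D := by
        calc ε * ((k:ℝ))^2 ≤ ‖c k‖ * (2 * Real.pi * (k:ℝ) + t)^2 := by
              nlinarith [sq_nonneg ((k:ℝ)), norm_nonneg (c k)]
          _ ≤ D := by rw [mul_comm]; exact hD k
      have h2 : ((k:ℝ))^2 ≤ D / ε := (le_div_iff₀ hε).mpr (by linarith [mul_comm ε (((k:ℝ))^2)] )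
      have h3 : ((k^2 : ℤ):ℝ) ≤ ((M:ℤ):ℝ) := by
        rw [hM]; push_cast
        have hc := Int.le_ceil (D / ε)
        linarith
      have h4 : k^2 ≤ M := by exact_mod_cast h3
      have h5 : |k| ≤ M := by
        have h6 : 1 ≤ |k| := Int.one_le_abs (by omega)
        nlinarith [sq_abs k, abs_nonneg k]
      exact abs_le.mp h5
  have hfin : Set.Finite {k : ℤ | ε ≤ ‖c k‖} := (Set.finite_Icc (-M) M).subset hsub
  have hjs : j ∈ hfin.toFinset := by
    rw [Set.Finite.mem_toFinset]; exact le_refl ε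
  obtain ⟨k0, hk0s, hk0max⟩ := hfin.toFinset.exists_max_image (fun k => ‖c k‖) ⟨j, hjs⟩
  have hk0ε : ε ≤ ‖c k0‖ := by
    rw [Set.Finite.mem_toFinset] at hk0s; exact hk0s
  refine ⟨k0, lt_of_lt_of_le hε hk0ε, fun k => ?_⟩
  by_cases hks : k ∈ hfin.toFinset
  · exact hk0max k hks
  · rw [Set.Finite.mem_toFinset, Set.mem_setOf_eq, not_le] at hks
    linarith

lemma fac_ub' {t : ℝ} (ht0 : 0 ≤ t) (ht1 : t ≤ 1) (j : ℤ) :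
    |2 * Real.pi * (j:ℝ) + t| ≤ 7 * |(j:ℝ)| + 1 := by
  have hpi := Real.pi_lt_d6
  have h1 : |2 * Real.pi * (j:ℝ) + t| ≤ |2 * Real.pi * (j:ℝ)| + |t| := abs_add_le _ _
  have h2 : |2 * Real.pi * (j:ℝ)| = 2 * Real.pi * |(j:ℝ)| := by
    rw [abs_mul, abs_of_pos (by positivity : (0:ℝ) < 2 * Real.pi)]
  have h3 : |t| = t := abs_of_nonneg ht0
  have h4 : 0 ≤ |(j:ℝ)| := abs_nonneg _
  nlinarith

/-- Upper gap for the neighbours of the resonant index. -/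
lemma gap_upper {t : ℝ} (ht0 : 0 ≤ t) (ht1 : t ≤ 1) {n : ℕ} (hn : 1 ≤ n) (k : ℤ)
    (h : (|k - (n:ℤ)| = 1 ∧ |k + (n:ℤ)| ≤ 2*(n:ℤ)+1) ∨
         (|k + (n:ℤ)| = 1 ∧ |k - (n:ℤ)| ≤ 2*(n:ℤ)+1)) :
    |(2 * Real.pi * (k:ℝ) + t)^2 - (2 * Real.pi * (n:ℝ))^2| ≤ 176 * (n:ℝ) := by
  have hfe : (2 * Real.pi * (k:ℝ) + t)^2 - (2 * Real.pi * (n:ℝ))^2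
      = (2 * Real.pi * ((k - (n:ℤ) : ℤ):ℝ) + t) * (2 * Real.pi * ((k + (n:ℤ) : ℤ):ℝ) + t) := by
    push_cast; ring
  rw [hfe, abs_mul]
  have u1 := fac_ub' ht0 ht1 (k - n)
  have u2 := fac_ub' ht0 ht1 (k + n)
  have a1 : |((k - (n:ℤ) : ℤ):ℝ)| = ((|k - (n:ℤ)| : ℤ) : ℝ) := by rw [Int.cast_abs]
  have a2 : |((k + (n:ℤ) : ℤ):ℝ)| = ((|k + (n:ℤ)| : ℤ) : ℝ) := by rw [Int.cast_abs]
  have hnR : (1:ℝ) ≤ (n:ℝ) := by exact_mod_cast hn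
  have p1 : (0:ℝ) ≤ |2 * Real.pi * ((k - (n:ℤ) : ℤ):ℝ) + t| := abs_nonneg _
  have p2 : (0:ℝ) ≤ |2 * Real.pi * ((k + (n:ℤ) : ℤ):ℝ) + t| := abs_nonneg _
  rcases h with ⟨h1, h2⟩ | ⟨h1, h2⟩
  · have c1 : |((k - (n:ℤ) : ℤ):ℝ)| = 1 := by rw [a1, h1]; norm_num
    have c2 : |((k + (n:ℤ) : ℤ):ℝ)| ≤ 2*(n:ℝ)+1 := by
      rw [a2]; exact_mod_cast h2
    rw [c1] at u1
    nlinarith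
  · have c1 : |((k + (n:ℤ) : ℤ):ℝ)| = 1 := by rw [a2, h1]; norm_num
    have c2 : |((k - (n:ℤ) : ℤ):ℝ)| ≤ 2*(n:ℝ)+1 := by
      rw [a1]; exact_mod_cast h2
    rw [c1] at u2
    nlinarith

lemma mcoef_norm_le (t : ℝ) {y : ℝ → ℂ} (hy : Continuous y) (k : ℤ) :
    ‖mcoef t y k‖ ≤ ∫ x in (0:ℝ)..1, ‖y x‖ := by
  rw [mcoef]
  refine (intervalIntegral.norm_integral_le_integral_norm (by norm_num : (0:ℝ) ≤ 1)).trans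
    (le_of_eq ?_)
  apply intervalIntegral.integral_congr
  intro x _
  show ‖mE (2 * Real.pi * k + t) x * y x‖ = ‖y x‖
  rw [norm_mul, mE_norm, one_mul]

set_option maxHeartbeats 1000000 in
/-- Formula (58): uniformly for `t ∈ [0, n⁻³]`, the eigenvalues of `H_t` lying in
the disk `U(n,t,ρ)` satisfy `λ = (2πn)² + O(n⁻²)`. -/
theorem stmt13 (a b : ℂ) :
    ∃ ρ : ℝ, 0 < ρ ∧ ρ < 1 / (15 * Real.pi) ∧ ∃ K : ℝ, 0 < K ∧ ∃ N : ℕ, ∀ n : ℕ, N < n →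
      ∀ t : ℝ, t ∈ Set.Icc (0 : ℝ) (((n : ℝ) ^ 3)⁻¹) →
      ∀ lam : ℂ, IsEigenvalue a b t lam →
        ‖lam - (((2 * Real.pi * (n : ℝ) + t) ^ 2 : ℝ) : ℂ)‖ ≤ 15 * Real.pi * (n : ℝ) * ρ →
        ‖lam - (((2 * Real.pi * (n : ℝ)) ^ 2 : ℝ) : ℂ)‖ ≤ K * ((n : ℝ) ^ 2)⁻¹ := by
  have hpiL := Real.pi_gt_d6
  have hpiU := Real.pi_lt_d6
  have hpi0 : 0 < Real.pi := Real.pi_pos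
  set A := ‖a‖ with hA
  set B2 := ‖b‖ with hB2
  have hA0 : 0 ≤ A := norm_nonneg a
  have hB20 : 0 ≤ B2 := norm_nonneg b
  refine ⟨1/(30*Real.pi), by positivity, ?_,
    A*B2 + (A^2+B2^2)*(A+B2) + 14, by positivity,
    28 + Nat.ceil (A+B2) + Nat.ceil (A*B2), ?_⟩
  · rw [div_lt_div_iff₀ (by positivity) (by positivity)]
    nlinarith
  intro n hn t ht lam hev hdisc
  set nR : ℝ := (n:ℝ) with hnR
  -- basic size facts
  have hn29 : 29 ≤ n := by omega
  have hn29R : (29:ℝ) ≤ nR := by rw [hnR]; exact_mod_cast hn29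
  have hn1 : (1:ℝ) ≤ nR := by linarith
  have hn0 : (0:ℝ) < nR := by linarith
  have hnN1 : 1 ≤ n := by omega
  have hAB1 : A + B2 ≤ nR := by
    have h1 : (Nat.ceil (A+B2) : ℝ) ≤ nR := by
      have h2 : Nat.ceil (A+B2) ≤ n := by omega
      rw [hnR]; exact_mod_cast h2
    exact (Nat.le_ceil (A+B2)).trans h1
  have hAB2 : A * B2 ≤ nR := by
    have h1 : (Nat.ceil (A*B2) : ℝ) ≤ nR := by
      have h2 : Nat.ceil (A*B2) ≤ n := by omega
      rw [hnR]; exact_mod_cast h2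
    exact (Nat.le_ceil (A*B2)).trans h1
  have ht0 : 0 ≤ t := ht.1
  have htn : t ≤ (nR^3)⁻¹ := ht.2
  have hnpow : (1:ℝ) ≤ nR^3 := one_le_pow₀ hn1
  have hts : t * nR^3 ≤ 1 := by
    calc t * nR^3 ≤ (nR^3)⁻¹ * nR^3 := by
          apply mul_le_mul_of_nonneg_right htn (by positivity)
      _ = 1 := inv_mul_cancel₀ (by positivity)
  have ht1 : t ≤ 1 := by
    have h2 : (nR^3)⁻¹ ≤ 1 := by
      rw [inv_le_one_iff₀]; right; exact hnpow
    linarith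
  have hnn3 : nR ≤ nR^3 := by
    nlinarith [mul_nonneg (mul_nonneg hn0.le (sub_nonneg.mpr hn1)) (by linarith : (0:ℝ) ≤ nR + 1)]
  have htnR : t * nR ≤ 1 := by
    have := mul_le_mul_of_nonneg_left hnn3 ht0
    linarith
  -- the disc hypothesis
  have hrad : 15 * Real.pi * nR * (1/(30*Real.pi)) = nR/2 := by
    field_simp; ring
  rw [hrad] at hdisc
  -- small real quantities
  have div_trick : ∀ u c : ℝ, u * nR^2 ≤ c → u ≤ c * (nR^2)⁻¹ := by
    intro u c h
    rw [← div_eq_mul_inv, le_div_iff₀ (by positivity)]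
    exact h
  have hclose : ∀ s : ℝ, s = nR ∨ s = -nR →
      |(2*Real.pi*s + t)^2 - (2*Real.pi*nR)^2| ≤ 14 * (nR^2)⁻¹ := by
    intro s hs
    apply div_trick
    have hexp : ((2*Real.pi*s + t)^2 - (2*Real.pi*nR)^2) * nR^2
        = (4*Real.pi*s*(t*nR^3))/nR + (t*nR)^2 := by
      rcases hs with h | h <;> rw [h] <;> field_simp <;> ring
    have habs : |(2*Real.pi*s + t)^2 - (2*Real.pi*nR)^2| * nR^2
        = |((2*Real.pi*s + t)^2 - (2*Real.pi*nR)^2) * nR^2| := by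
      rw [abs_mul, abs_of_pos (by positivity : (0:ℝ) < nR^2)]
    rw [habs, hexp]
    have h1 : |(4*Real.pi*s*(t*nR^3))/nR + (t*nR)^2|
        ≤ |(4*Real.pi*s*(t*nR^3))/nR| + |(t*nR)^2| := abs_add_le _ _
    have hsabs : |s| = nR := by
      rcases hs with h | h
      · rw [h, abs_of_pos hn0]
      · rw [h, abs_neg, abs_of_pos hn0]
    have h2 : |(4*Real.pi*s*(t*nR^3))/nR| ≤ 4*Real.pi := by
      rw [abs_div, abs_of_pos hn0, div_le_iff₀ hn0]
      have habs2 : |4*Real.pi*s*(t*nR^3)| = 4*Real.pi * |s| * |t*nR^3| := by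
        rw [abs_mul, abs_mul, abs_of_pos (by positivity : (0:ℝ) < 4*Real.pi)]
      rw [habs2, hsabs]
      have ht3 : |t*nR^3| ≤ 1 := by
        rw [abs_of_nonneg (mul_nonneg ht0 (by positivity))]; exact hts
      have h40 : (0:ℝ) < 4*Real.pi*nR := by positivity
      nlinarith [ht3, h40, abs_nonneg (t*nR^3)]
    have h3 : |(t*nR)^2| ≤ 1 := by
      rw [abs_of_nonneg (sq_nonneg (t*nR))]
      nlinarith [mul_nonneg ht0 hn0.le, htnR]
    nlinarith
  -- distance from lam to (2πn)²
  have hlamc : ‖lam - (((2*Real.pi*nR)^2 : ℝ) : ℂ)‖ ≤ nR := by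
    have hsplit : lam - (((2*Real.pi*nR)^2 : ℝ) : ℂ)
        = (lam - (((2*Real.pi*nR + t)^2 : ℝ) : ℂ))
          + ((((2*Real.pi*nR + t)^2 - (2*Real.pi*nR)^2 : ℝ)) : ℂ) := by
      push_cast; ring
    rw [hsplit]
    refine (norm_add_le _ _).trans ?_
    rw [Complex.norm_real, Real.norm_eq_abs]
    have hc := hclose nR (Or.inl rfl)
    have hinv : (nR^2)⁻¹ ≤ 1 := by
      rw [inv_le_one_iff₀]; right; nlinarith
    nlinarith
  -- the eigenfunction and its Fourier coefficients
  obtain ⟨y, hy⟩ := hev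
  set c : ℤ → ℂ := mcoef t y with hc
  set muC : ℤ → ℂ := fun k => (((2 * Real.pi * (k:ℝ) + t : ℝ)):ℂ)^2 with hmuC
  have e : ∀ k : ℤ, (lam - muC k) * c k = a * c (k+1) + b * c (k-1) := by
    intro k
    have h := mcoef_rec hy k
    simp only [hmuC, hc]
    linear_combination h
  have hmuCr : ∀ k : ℤ, muC k = ((((2 * Real.pi * (k:ℝ) + t)^2 : ℝ)):ℂ) := by
    intro k; simp only [hmuC]; push_cast; ring
  -- gap estimates
  have ggap : ∀ k : ℤ, |k| ≠ (n:ℤ) → 24*nR ≤ ‖lam - muC k‖ := by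
    intro k hk
    have h1 := gap_lower ht0 ht1 hnN1 k hk
    have h2 : ((((2 * Real.pi * (k:ℝ) + t)^2 - (2*Real.pi*nR)^2 : ℝ)):ℂ)
        = (lam - (((2*Real.pi*nR)^2 : ℝ):ℂ)) - (lam - muC k) := by
      rw [hmuCr]; push_cast; ring
    have h3 : |(2 * Real.pi * (k:ℝ) + t)^2 - (2*Real.pi*nR)^2|
        ≤ ‖lam - (((2*Real.pi*nR)^2 : ℝ):ℂ)‖ + ‖lam - muC k‖ := by
      calc |(2 * Real.pi * (k:ℝ) + t)^2 - (2*Real.pi*nR)^2|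
          = ‖((((2 * Real.pi * (k:ℝ) + t)^2 - (2*Real.pi*nR)^2 : ℝ)):ℂ)‖ := by
            rw [Complex.norm_real, Real.norm_eq_abs]
        _ = ‖(lam - (((2*Real.pi*nR)^2 : ℝ):ℂ)) - (lam - muC k)‖ := by rw [h2]
        _ ≤ _ := norm_sub_le _ _
    linarith
  -- coefficient bounds
  set Bint : ℝ := ∫ x in (0:ℝ)..1, ‖y x‖ with hBint
  have hBk : ∀ k : ℤ, ‖c k‖ ≤ Bint := fun k => mcoef_norm_le t hy.1.continuous k
  have hB0 : 0 ≤ Bint := le_trans (norm_nonneg _) (hBk 0)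
  have hD : ∀ k : ℤ, (2 * Real.pi * (k:ℝ) + t)^2 * ‖c k‖ ≤ (‖lam‖ + A + B2) * Bint := by
    intro k
    have h1 : muC k * c k = lam * c k - a * c (k+1) - b * c (k-1) := by
      linear_combination -(e k)
    have h2 : ‖muC k * c k‖ = (2 * Real.pi * (k:ℝ) + t)^2 * ‖c k‖ := by
      rw [norm_mul]
      congr 1
      rw [hmuC]
      simp only []
      rw [norm_pow, Complex.norm_real, Real.norm_eq_abs, sq_abs]
    have h3 : ‖lam * c k - a * c (k+1) - b * c (k-1)‖
        ≤ ‖lam‖ * Bint + A * Bint + B2 * Bint := by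
      refine (norm_sub_le _ _).trans ?_
      have h4 := (norm_sub_le (lam * c k) (a * c (k+1)))
      have h5 : ‖lam * c k‖ ≤ ‖lam‖ * Bint :=
        (norm_mul _ _).le.trans (mul_le_mul_of_nonneg_left (hBk k) (norm_nonneg lam))
      have h6 : ‖a * c (k+1)‖ ≤ A * Bint :=
        (norm_mul _ _).le.trans (mul_le_mul_of_nonneg_left (hBk (k+1)) (norm_nonneg a))
      have h7 : ‖b * c (k-1)‖ ≤ B2 * Bint :=
        (norm_mul _ _).le.trans (mul_le_mul_of_nonneg_left (hBk (k-1)) (norm_nonneg b))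
      linarith
    rw [← h2, h1]
    calc ‖lam * c k - a * c (k+1) - b * c (k-1)‖ ≤ ‖lam‖ * Bint + A * Bint + B2 * Bint := h3
      _ = (‖lam‖ + A + B2) * Bint := by ring
  obtain ⟨m, hk0pos, hk0max⟩ := exists_max c ht0 ht1 hD (mcoef_exists_ne_zero hy)
  set S : ℝ := ‖c m‖ with hS
  -- nonresonant coefficients are small
  have hnr : ∀ k : ℤ, |k| ≠ (n:ℤ) → 24*nR*‖c k‖ ≤ (A+B2)*S := by
    intro k hk
    have h1 : 24*nR*‖c k‖ ≤ ‖lam - muC k‖ * ‖c k‖ :=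
      mul_le_mul_of_nonneg_right (ggap k hk) (norm_nonneg _)
    have h2 : ‖lam - muC k‖ * ‖c k‖ = ‖a * c (k+1) + b * c (k-1)‖ := by
      rw [← norm_mul, e k]
    have h3 : ‖a * c (k+1) + b * c (k-1)‖ ≤ A*S + B2*S := by
      refine (norm_add_le _ _).trans ?_
      have h6 : ‖a * c (k+1)‖ ≤ A * S :=
        (norm_mul _ _).le.trans (mul_le_mul_of_nonneg_left (hk0max (k+1)) (norm_nonneg a))
      have h7 : ‖b * c (k-1)‖ ≤ B2 * S :=
        (norm_mul _ _).le.trans (mul_le_mul_of_nonneg_left (hk0max (k-1)) (norm_nonneg b))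
      linarith
    nlinarith
  -- the maximizing index is resonant
  have habs : ∀ j : ℤ, |j| = (n:ℤ) → j = (n:ℤ) ∨ j = -(n:ℤ) :=
    fun j h => (abs_eq (Int.natCast_nonneg n)).mp h
  have hk0n : m = (n:ℤ) ∨ m = -(n:ℤ) := by
    by_contra hcon
    push_neg at hcon
    have hne : |m| ≠ (n:ℤ) := fun h => by
      rcases habs m h with h' | h'
      · exact hcon.1 h'
      · exact hcon.2 h'
    have := hnr m hne
    nlinarith
  have hn29z : (29:ℤ) ≤ (n:ℤ) := by exact_mod_cast hn29
  have hidx : ∀ j : ℤ, (j = m+1 ∨ j = m-1 ∨ j = m+2 ∨ j = m-2) → |j| ≠ (n:ℤ) := by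
    intro j hj h
    rcases habs _ h with h' | h' <;> rcases hk0n with h2 | h2 <;>
      rcases hj with rfl | rfl | rfl | rfl <;> omega
  -- the three recursion relations near the resonant index
  have e1 : (lam - muC m) * c m = a * c (m+1) + b * c (m-1) := e m
  have e2 : (lam - muC (m+1)) * c (m+1) = a * c (m+2) + b * c m := by
    have h := e (m+1)
    rw [show m+1+1 = m+2 by ring, show m+1-1 = m by ring] at h
    exact h
  have e3 : (lam - muC (m-1)) * c (m-1) = a * c m + b * c (m-2) := by
    have h := e (m-1)
    rw [show m-1+1 = m by ring, show m-1-1 = m-2 by ring] at h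
    exact h
  have hsum : (lam - muC (m+1)) + (lam - muC (m-1))
      = 2*(lam - muC m) - 8*((Real.pi:ℝ):ℂ)^2 := by
    simp only [hmuC]
    push_cast
    ring
  have keyID : (lam - muC m) * c m * ((lam - muC (m+1)) * (lam - muC (m-1)))
      = a*b*(2*(lam - muC m) - 8*((Real.pi:ℝ):ℂ)^2) * c m
        + a^2 * (lam - muC (m-1)) * c (m+2) + b^2 * (lam - muC (m+1)) * c (m-2) := by
    linear_combination ((lam - muC (m+1)) * (lam - muC (m-1))) * e1
      + a*(lam - muC (m-1))*e2 + b*(lam - muC (m+1))*e3 + (a*b*c m)*hsum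
  -- norms
  set X : ℝ := ‖lam - muC m‖ with hX
  set dp : ℝ := ‖lam - muC (m+1)‖ with hdp
  set dm : ℝ := ‖lam - muC (m-1)‖ with hdm
  set cp : ℝ := ‖c (m+2)‖ with hcp
  set cm2 : ℝ := ‖c (m-2)‖ with hcm2
  have hX0 : 0 ≤ X := norm_nonneg _
  have hS0 : 0 ≤ S := norm_nonneg _
  have hcp0 : 0 ≤ cp := norm_nonneg _
  have hcm20 : 0 ≤ cm2 := norm_nonneg _
  have hdp_lb : 24*nR ≤ dp := ggap (m+1) (hidx (m+1) (Or.inl rfl))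
  have hdm_lb : 24*nR ≤ dm := ggap (m-1) (hidx (m-1) (Or.inr (Or.inl rfl)))
  -- upper bounds for dp, dm
  have hub : ∀ k : ℤ, ((|k - (n:ℤ)| = 1 ∧ |k + (n:ℤ)| ≤ 2*(n:ℤ)+1) ∨
      (|k + (n:ℤ)| = 1 ∧ |k - (n:ℤ)| ≤ 2*(n:ℤ)+1)) → ‖lam - muC k‖ ≤ 177*nR := by
    intro k hcond
    have h1 := gap_upper ht0 ht1 hnN1 k hcond
    have h2 : lam - muC k = (lam - (((2*Real.pi*nR)^2 : ℝ):ℂ))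
        - ((((2 * Real.pi * (k:ℝ) + t)^2 - (2*Real.pi*nR)^2 : ℝ)):ℂ) := by
      rw [hmuCr]; push_cast; ring
    rw [h2]
    refine (norm_sub_le _ _).trans ?_
    rw [Complex.norm_real, Real.norm_eq_abs]
    linarith
  have hdp_ub : dp ≤ 177*nR := by
    apply hub
    rcases hk0n with hm' | hm'
    · left
      constructor
      · rw [hm', show (n:ℤ) + 1 - n = 1 by ring]; exact abs_one
      · rw [hm', show (n:ℤ) + 1 + n = 2*n+1 by ring, abs_of_nonneg (by omega)]
    · right
      constructor
      · rw [hm', show -(n:ℤ) + 1 + n = 1 by ring]; exact abs_one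
      · rw [hm', show -(n:ℤ) + 1 - n = -(2*n-1) by ring, abs_neg, abs_of_nonneg (by omega)]
        omega
  have hdm_ub : dm ≤ 177*nR := by
    apply hub
    rcases hk0n with hm' | hm'
    · left
      constructor
      · rw [hm', show (n:ℤ) - 1 - n = -1 by ring, abs_neg]; exact abs_one
      · rw [hm', show (n:ℤ) - 1 + n = 2*n-1 by ring, abs_of_nonneg (by omega)]; omega
    · right
      constructor
      · rw [hm', show -(n:ℤ) - 1 + n = -1 by ring, abs_neg]; exact abs_one
      · rw [hm', show -(n:ℤ) - 1 - n = -(2*n+1) by ring, abs_neg, abs_of_nonneg (by omega)]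
  have hcpb : 24*nR*cp ≤ (A+B2)*S := hnr (m+2) (hidx (m+2) (Or.inr (Or.inr (Or.inl rfl))))
  have hcm2b : 24*nR*cm2 ≤ (A+B2)*S := hnr (m-2) (hidx (m-2) (Or.inr (Or.inr (Or.inr rfl))))
  -- norm of the key identity
  have hnormL : ‖(lam - muC m) * c m * ((lam - muC (m+1)) * (lam - muC (m-1)))‖
      = X * S * (dp * dm) := by
    simp only [hX, hS, hdp, hdm, norm_mul]
  have hfac79 : ‖2*(lam - muC m) - 8*((Real.pi:ℝ):ℂ)^2‖ ≤ 2*X + 79 := by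
    refine (norm_sub_le _ _).trans ?_
    have h1 : ‖(2:ℂ)*(lam - muC m)‖ = 2*X := by
      rw [hX, norm_mul]; norm_num
    have h2 : ‖(8:ℂ)*((Real.pi:ℝ):ℂ)^2‖ = 8*Real.pi^2 := by
      rw [norm_mul, norm_pow, Complex.norm_real, Real.norm_eq_abs,
        abs_of_pos hpi0]
      norm_num
    rw [h1, h2]
    nlinarith
  have hnormR : ‖a*b*(2*(lam - muC m) - 8*((Real.pi:ℝ):ℂ)^2) * c m
        + a^2 * (lam - muC (m-1)) * c (m+2) + b^2 * (lam - muC (m+1)) * c (m-2)‖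
      ≤ A*B2*(2*X+79)*S + A^2*dm*cp + B2^2*dp*cm2 := by
    refine (norm_add_le _ _).trans ?_
    have t1 : ‖a*b*(2*(lam - muC m) - 8*((Real.pi:ℝ):ℂ)^2) * c m + a^2 * (lam - muC (m-1)) * c (m+2)‖
        ≤ A*B2*(2*X+79)*S + A^2*dm*cp := by
      refine (norm_add_le _ _).trans ?_
      have u1 : ‖a*b*(2*(lam - muC m) - 8*((Real.pi:ℝ):ℂ)^2) * c m‖ ≤ A*B2*(2*X+79)*S := by
        rw [norm_mul, norm_mul, norm_mul]
        have hcm : ‖c m‖ ≤ S := hk0max m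
        have h79 : (0:ℝ) ≤ 2*X+79 := by linarith [hX0]
        have h5 : ‖2*(lam - muC m) - 8*((Real.pi:ℝ):ℂ)^2‖ * ‖c m‖ ≤ (2*X+79)*S :=
          mul_le_mul hfac79 hcm (norm_nonneg _) h79
        calc ‖a‖*‖b‖*‖2*(lam - muC m) - 8*((Real.pi:ℝ):ℂ)^2‖*‖c m‖
            = (‖a‖*‖b‖)*(‖2*(lam - muC m) - 8*((Real.pi:ℝ):ℂ)^2‖*‖c m‖) := by ring
          _ ≤ (‖a‖*‖b‖)*((2*X+79)*S) :=
              mul_le_mul_of_nonneg_left h5 (by positivity)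
          _ = A*B2*(2*X+79)*S := by rw [hA, hB2]; ring
      have u2 : ‖a^2 * (lam - muC (m-1)) * c (m+2)‖ = A^2*dm*cp := by
        simp only [hA, hdm, hcp, norm_mul, norm_pow]
      linarith [u2.le]
    have t2 : ‖b^2 * (lam - muC (m+1)) * c (m-2)‖ = B2^2*dp*cm2 := by
      simp only [hB2, hdp, hcm2, norm_mul, norm_pow]
    linarith [t2.le]
  have hmain : X * S * (dp * dm) ≤ A*B2*(2*X+79)*S + A^2*dm*cp + B2^2*dp*cm2 := by
    calc X * S * (dp * dm)
        = ‖(lam - muC m) * c m * ((lam - muC (m+1)) * (lam - muC (m-1)))‖ := hnormL.symm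
      _ = ‖a*b*(2*(lam - muC m) - 8*((Real.pi:ℝ):ℂ)^2) * c m
            + a^2 * (lam - muC (m-1)) * c (m+2) + b^2 * (lam - muC (m+1)) * c (m-2)‖ :=
          congrArg (fun z : ℂ => ‖z‖) keyID
      _ ≤ _ := hnormR
  -- assemble the quadratic inequality
  have hlow : X * S * (576*nR^2) ≤ X * S * (dp * dm) := by
    have h1 : (24*nR)*(24*nR) ≤ dp*dm :=
      mul_le_mul hdp_lb hdm_lb (by positivity) (le_trans (by positivity) hdp_lb)
    have h3 : 0 ≤ X*S := mul_nonneg hX0 hS0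
    calc X*S*(576*nR^2) = (X*S)*((24*nR)*(24*nR)) := by ring
      _ ≤ (X*S)*(dp*dm) := mul_le_mul_of_nonneg_left h1 h3
      _ = X*S*(dp*dm) := by ring
  have hterm1 : A^2*dm*cp ≤ 9*A^2*((A+B2)*S) := by
    have t1 : dm * cp ≤ 177*nR*cp := mul_le_mul_of_nonneg_right hdm_ub hcp0
    have t2 : 177*nR*cp ≤ 9*((A+B2)*S) := by
      have hABS : 0 ≤ (A+B2)*S := mul_nonneg (by linarith) hS0
      linarith only [hcpb, hABS]
    calc A^2*dm*cp = A^2*(dm*cp) := by ring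
      _ ≤ A^2*(9*((A+B2)*S)) := by
          apply mul_le_mul_of_nonneg_left (t1.trans t2) (sq_nonneg A)
      _ = 9*A^2*((A+B2)*S) := by ring
  have hterm2 : B2^2*dp*cm2 ≤ 9*B2^2*((A+B2)*S) := by
    have t1 : dp * cm2 ≤ 177*nR*cm2 := mul_le_mul_of_nonneg_right hdp_ub hcm20
    have t2 : 177*nR*cm2 ≤ 9*((A+B2)*S) := by
      have hABS : 0 ≤ (A+B2)*S := mul_nonneg (by linarith) hS0
      linarith only [hcm2b, hABS]
    calc B2^2*dp*cm2 = B2^2*(dp*cm2) := by ring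
      _ ≤ B2^2*(9*((A+B2)*S)) := by
          apply mul_le_mul_of_nonneg_left (t1.trans t2) (sq_nonneg B2)
      _ = 9*B2^2*((A+B2)*S) := by ring
  have htot : X * (576*nR^2) * S ≤ (A*B2*(2*X+79) + 9*(A^2+B2^2)*(A+B2)) * S := by
    have h9 : X * S * (576*nR^2) ≤ A*B2*(2*X+79)*S + 9*A^2*((A+B2)*S) + 9*B2^2*((A+B2)*S) := by
      linarith only [hlow, hmain, hterm1, hterm2]
    calc X * (576*nR^2) * S = X * S * (576*nR^2) := by ring
      _ ≤ A*B2*(2*X+79)*S + 9*A^2*((A+B2)*S) + 9*B2^2*((A+B2)*S) := h9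
      _ = (A*B2*(2*X+79) + 9*(A^2+B2^2)*(A+B2)) * S := by ring
  have hdivS : X * (576*nR^2) ≤ A*B2*(2*X+79) + 9*(A^2+B2^2)*(A+B2) :=
    le_of_mul_le_mul_right htot hk0pos
  -- conclude X ≤ C0 / n²
  have hnn2 : nR ≤ nR^2 := by
    calc nR = nR*1 := by ring
      _ ≤ nR*nR := mul_le_mul_of_nonneg_left hn1 hn0.le
      _ = nR^2 := by ring
  have hXAB : X*(2*(A*B2)) ≤ X*(2*nR^2) := by
    apply mul_le_mul_of_nonneg_left _ hX0
    linarith only [hAB2, hnn2]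
  have hXfin : X * nR^2 ≤ A*B2 + (A^2+B2^2)*(A+B2) := by
    have hQ0 : 0 ≤ (A^2+B2^2)*(A+B2) := by positivity
    have hAB0' : 0 ≤ A*B2 := mul_nonneg hA0 hB20
    linarith only [hdivS, hXAB, hQ0, hAB0']
  have hXle : X ≤ (A*B2 + (A^2+B2^2)*(A+B2)) * (nR^2)⁻¹ := div_trick _ _ hXfin
  -- final triangle inequality
  have hmR : ((m:ℤ):ℝ) = nR ∨ ((m:ℤ):ℝ) = -nR := by
    rcases hk0n with h | h
    · left; rw [h, hnR]; push_cast; ring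
    · right; rw [h, hnR]; push_cast; ring
  have hcloseM : |(2*Real.pi*((m:ℤ):ℝ) + t)^2 - (2*Real.pi*nR)^2| ≤ 14 * (nR^2)⁻¹ :=
    hclose _ hmR
  have hsplit : lam - (((2 * Real.pi * nR) ^ 2 : ℝ) : ℂ)
      = (lam - muC m) + ((((2*Real.pi*((m:ℤ):ℝ) + t)^2 - (2*Real.pi*nR)^2 : ℝ)):ℂ) := by
    rw [hmuCr]; push_cast; ring
  rw [hsplit]
  refine (norm_add_le _ _).trans ?_
  rw [Complex.norm_real, Real.norm_eq_abs]
  have : X + 14 * (nR^2)⁻¹ ≤ (A*B2 + (A^2+B2^2)*(A+B2) + 14) * (nR^2)⁻¹ := by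
    have h1 : (A*B2 + (A^2+B2^2)*(A+B2)) * (nR^2)⁻¹ + 14 * (nR^2)⁻¹
        = (A*B2 + (A^2+B2^2)*(A+B2) + 14) * (nR^2)⁻¹ := by ring
    linarith
  linarith [hcloseM]
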